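/- Let B be a real m-by-n₂ matrix and C a real m-by-n₃ matrix, both with full column rank, and let β > 0. Let Q be the block matrix [[βB^TB, 0, 0], [βC^TB, βC^TC, 0], [-B, -C, (1/β)I_m]]. Then Q^T + Q = [[2βB^TB, βB^TC, -B^T], [βC^TB, 2βC^TC, -C^T], [-B, -C, (2/β)I_m]] is symmetric positive definite. -/

import Mathlib

open Matrix

lemma stmt11_key {m : ℕ} {β : ℝ} (hβ : 0 < β) (a b c : Fin m → ℝ)
    (h : a ≠ 0 ∨ b ≠ 0 ∨ c ≠ 0) :
    0 < 2*β*(a ⬝ᵥ a) + 2*β*(a ⬝ᵥ b) + 2*β*(b ⬝ᵥ b) - 2*(a ⬝ᵥ c) - 2*(b ⬝ᵥ c) + (2/β)*(c ⬝ᵥ c) := by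
  have hg : 2*β*(a ⬝ᵥ a) + 2*β*(a ⬝ᵥ b) + 2*β*(b ⬝ᵥ b) - 2*(a ⬝ᵥ c) - 2*(b ⬝ᵥ c) + (2/β)*(c ⬝ᵥ c)
      = ∑ k, (β*(a k)^2 + β*(b k)^2 + (1/β)*(c k)^2 + (1/β)*(β*(a k + b k) - c k)^2) := by
    simp only [dotProduct, Finset.mul_sum, ← Finset.sum_add_distrib, ← Finset.sum_sub_distrib]
    apply Finset.sum_congr rfl; intro k _
    field_simp
    ring
  rw [hg]
  have hnn : ∀ k ∈ Finset.univ, (0:ℝ) ≤ β*(a k)^2 + β*(b k)^2 + (1/β)*(c k)^2 + (1/β)*(β*(a k + b k) - c k)^2 := by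
    intro k _; positivity
  have hex : ∃ k ∈ Finset.univ, (0:ℝ) < β*(a k)^2 + β*(b k)^2 + (1/β)*(c k)^2 + (1/β)*(β*(a k + b k) - c k)^2 := by
    obtain ⟨k, hk⟩ : ∃ k, a k ≠ 0 ∨ b k ≠ 0 ∨ c k ≠ 0 := by
      rcases h with h | h | h <;> obtain ⟨k, hk⟩ := Function.ne_iff.mp h <;> exact ⟨k, by tauto⟩
    refine ⟨k, Finset.mem_univ _, ?_⟩
    have h1 : 0 ≤ (1/β)*(β*(a k + b k) - c k)^2 := by positivity
    have t1 : 0 ≤ β * (a k)^2 := by positivity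
    have t2 : 0 ≤ β * (b k)^2 := by positivity
    have t3 : 0 ≤ (1/β) * (c k)^2 := by positivity
    rcases hk with hk | hk | hk
    · have : 0 < β * (a k)^2 := mul_pos hβ (lt_of_le_of_ne (sq_nonneg _) (Ne.symm (pow_ne_zero 2 hk)))
      linarith
    · have : 0 < β * (b k)^2 := mul_pos hβ (lt_of_le_of_ne (sq_nonneg _) (Ne.symm (pow_ne_zero 2 hk)))
      linarith
    · have : 0 < (1/β) * (c k)^2 := mul_pos (by positivity) (lt_of_le_of_ne (sq_nonneg _) (Ne.symm (pow_ne_zero 2 hk)))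
      linarith
  exact Finset.sum_pos' hnn hex

/-- For the three-block prediction matrix
`Q = [[βBᵀB, 0, 0], [βCᵀB, βCᵀC, 0], [-B, -C, (1/β)I]]` with `B`, `C` of full
column rank and `β > 0`, the matrix
`Qᵀ + Q = [[2βBᵀB, βBᵀC, -Bᵀ], [βCᵀB, 2βCᵀC, -Cᵀ], [-B, -C, (2/β)I]]`
is symmetric positive definite. -/
theorem stmt11 (m n₂ n₃ : ℕ)
    (B : Matrix (Fin m) (Fin n₂) ℝ) (C : Matrix (Fin m) (Fin n₃) ℝ)
    (hB : ∀ x : Fin n₂ → ℝ, B *ᵥ x = 0 → x = 0)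
    (hC : ∀ x : Fin n₃ → ℝ, C *ᵥ x = 0 → x = 0)
    (β : ℝ) (hβ : 0 < β)
    (Q : Matrix (Fin n₂ ⊕ (Fin n₃ ⊕ Fin m)) (Fin n₂ ⊕ (Fin n₃ ⊕ Fin m)) ℝ)
    (hQ : Q = Matrix.fromBlocks (β • (Bᵀ * B)) 0
        (Matrix.fromRows (β • (Cᵀ * B)) (-B))
        (Matrix.fromBlocks (β • (Cᵀ * C)) 0 (-C) ((1 / β) • 1))) :
    Qᵀ + Q
      = Matrix.fromBlocks ((2 * β) • (Bᵀ * B))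
          (Matrix.fromCols (β • (Bᵀ * C)) (-Bᵀ))
          (Matrix.fromRows (β • (Cᵀ * B)) (-B))
          (Matrix.fromBlocks ((2 * β) • (Cᵀ * C)) (-Cᵀ) (-C) ((2 / β) • 1))
    ∧ (Qᵀ + Q)ᵀ = Qᵀ + Q
    ∧ ∀ x : Fin n₂ ⊕ (Fin n₃ ⊕ Fin m) → ℝ, x ≠ 0 → 0 < x ⬝ᵥ ((Qᵀ + Q) *ᵥ x) := by
  have h1 : Qᵀ + Q
      = Matrix.fromBlocks ((2 * β) • (Bᵀ * B))
          (Matrix.fromCols (β • (Bᵀ * C)) (-Bᵀ))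
          (Matrix.fromRows (β • (Cᵀ * B)) (-B))
          (Matrix.fromBlocks ((2 * β) • (Cᵀ * C)) (-Cᵀ) (-C) ((2 / β) • 1)) := by
    subst hQ
    ext (i | j | k) (i' | j' | k') <;>
      simp [fromBlocks, fromRows_apply_inl, fromRows_apply_inr, fromCols, mul_apply, Matrix.one_apply, mul_comm,
        ← Finset.sum_add_distrib, Finset.mul_sum, two_mul, add_mul, mul_add] <;>
      ring_nf <;>
      first
        | (apply Finset.sum_congr rfl; intros; ring)
        | (split_ifs with h h2 <;> simp_all <;> ring)
  refine ⟨h1, by simp [transpose_add, transpose_transpose, add_comm], ?_⟩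
  intro x hx
  set u : Fin n₂ → ℝ := fun i => x (Sum.inl i) with hu
  set v : Fin n₃ → ℝ := fun j => x (Sum.inr (Sum.inl j)) with hv
  set w : Fin m → ℝ := fun k => x (Sum.inr (Sum.inr k)) with hw
  have hxel : x = Sum.elim u (Sum.elim v w) := by
    funext i; rcases i with i | j | k <;> rfl
  have hdisj : B *ᵥ u ≠ 0 ∨ C *ᵥ v ≠ 0 ∨ w ≠ 0 := by
    by_contra hcon
    push_neg at hcon
    obtain ⟨hz1, hz2, hz3⟩ := hcon
    apply hx
    rw [hxel, hB u hz1, hC v hz2, hz3]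
    funext i; rcases i with i | j | k <;> simp
  rw [h1, hxel, fromBlocks_mulVec]
  simp only [Sum.elim_comp_inl, Sum.elim_comp_inr, fromBlocks_mulVec,
    fromCols_mulVec_sumElim, fromRows_mulVec, smul_mulVec,
    ← mulVec_mulVec, neg_mulVec, one_mulVec,
    sumElim_dotProduct_sumElim, dotProduct_add, dotProduct_smul,
    dotProduct_neg, dotProduct_mulVec, vecMul_transpose, smul_eq_mul]
  simp only [← dotProduct_mulVec]
  rw [dotProduct_comm (C *ᵥ v) (B *ᵥ u), dotProduct_comm w (B *ᵥ u), dotProduct_comm w (C *ᵥ v)]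
  linarith [stmt11_key hβ (B *ᵥ u) (C *ᵥ v) w hdisj]
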